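/- For all real numbers s, t with 0 ≤ s ≤ t, the increment variance of the mixed sub-fractional Brownian motion satisfies the two-sided bound Σ_{i=1}^N a_i² γ_i (t−s)^{2H_i} ≤ f(s,t) ≤ Σ_{i=1}^N a_i² ν_i (t−s)^{2H_i}, where γ_i = 2 − 2^{2H_i−1} if H_i > 1/2 and γ_i = 1 if H_i ≤ 1/2, and ν_i = 1 if H_i > 1/2 and ν_i = 2 − 2^{2H_i−1} if H_i ≤ 1/2. -/
import Mathlib


open Real Finset

/-- The sub-fractional Brownian covariance. -/
noncomputable def subCov (H s t : ℝ) : ℝ :=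
  s ^ (2 * H) + t ^ (2 * H) - (1 / 2) * ((s + t) ^ (2 * H) + |t - s| ^ (2 * H))

/-- The mixed sub-fractional covariance `C(s,t) = Σ_i a_i² c_{H_i}(s,t)`. -/
noncomputable def mixedCov (N : ℕ) (a H : Fin N → ℝ) (s t : ℝ) : ℝ :=
  ∑ i, (a i) ^ 2 * subCov (H i) s t

/-- The increment variance `f(s,t) = C(t,t) + C(s,s) − 2 C(s,t)`. -/
noncomputable def incVar (N : ℕ) (a H : Fin N → ℝ) (s t : ℝ) : ℝ :=
  mixedCov N a H t t + mixedCov N a H s s - 2 * mixedCov N a H s t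

/-- `γ_i = 2 − 2^{2H_i−1}` if `H_i > 1/2`, and `γ_i = 1` if `H_i ≤ 1/2`. -/
noncomputable def gam (h : ℝ) : ℝ := if 1 / 2 < h then 2 - (2 : ℝ) ^ (2 * h - 1) else 1

/-- `ν_i = 1` if `H_i > 1/2`, and `ν_i = 2 − 2^{2H_i−1}` if `H_i ≤ 1/2`. -/
noncomputable def nu (h : ℝ) : ℝ := if 1 / 2 < h then 1 else 2 - (2 : ℝ) ^ (2 * h - 1)

/- ### Auxiliary midpoint convexity/concavity lemmas for rpow -/

private lemma mid_concave {p u x : ℝ} (hp0 : 0 ≤ p) (hp1 : p ≤ 1)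
    (hu : 0 ≤ u) (hux : u ≤ x) :
    (x + u) ^ p + (x - u) ^ p ≤ 2 * x ^ p := by
  have h := (Real.concaveOn_rpow hp0 hp1).2
    (show x - u ∈ Set.Ici (0:ℝ) by simp only [Set.mem_Ici]; linarith)
    (show x + u ∈ Set.Ici (0:ℝ) by simp only [Set.mem_Ici]; linarith)
    (show (0:ℝ) ≤ 1/2 by norm_num) (show (0:ℝ) ≤ 1/2 by norm_num)
    (show (1/2 : ℝ) + 1/2 = 1 by norm_num)
  have hc : (1/2 : ℝ) • (x - u) + (1/2 : ℝ) • (x + u) = x := by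
    simp only [smul_eq_mul]; ring
  rw [hc] at h
  simp only [smul_eq_mul] at h
  linarith

private lemma mid_convex {p u x : ℝ} (hp : 1 ≤ p)
    (hu : 0 ≤ u) (hux : u ≤ x) :
    2 * x ^ p ≤ (x + u) ^ p + (x - u) ^ p := by
  have h := (convexOn_rpow hp).2
    (show x - u ∈ Set.Ici (0:ℝ) by simp only [Set.mem_Ici]; linarith)
    (show x + u ∈ Set.Ici (0:ℝ) by simp only [Set.mem_Ici]; linarith)
    (show (0:ℝ) ≤ 1/2 by norm_num) (show (0:ℝ) ≤ 1/2 by norm_num)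
    (show (1/2 : ℝ) + 1/2 = 1 by norm_num)
  have hc : (1/2 : ℝ) • (x - u) + (1/2 : ℝ) • (x + u) = x := by
    simp only [smul_eq_mul]; ring
  rw [hc] at h
  simp only [smul_eq_mul] at h
  linarith

private lemma mid_convex_neg {p u x : ℝ} (hp : p ≤ 0)
    (hu : 0 ≤ u) (hux : u < x) :
    2 * x ^ p ≤ (x + u) ^ p + (x - u) ^ p := by
  have hx : 0 < x := lt_of_le_of_lt hu hux
  have hA : (0:ℝ) < (x + u) ^ p := Real.rpow_pos_of_pos (by linarith) p
  have hB : (0:ℝ) < (x - u) ^ p := Real.rpow_pos_of_pos (by linarith) p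
  have hxp : (0:ℝ) < x ^ p := Real.rpow_pos_of_pos hx p
  have hprod : x ^ p * x ^ p ≤ (x + u) ^ p * (x - u) ^ p := by
    rw [← Real.mul_rpow hx.le hx.le,
      ← Real.mul_rpow (by linarith : (0:ℝ) ≤ x + u) (by linarith : (0:ℝ) ≤ x - u)]
    exact Real.rpow_le_rpow_of_nonpos (by nlinarith) (by nlinarith) hp
  have hab : x ^ p ≤ Real.sqrt ((x + u) ^ p) * Real.sqrt ((x - u) ^ p) := by
    have h1 : Real.sqrt (x ^ p * x ^ p) ≤ Real.sqrt ((x + u) ^ p * (x - u) ^ p) :=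
      Real.sqrt_le_sqrt hprod
    rwa [Real.sqrt_mul_self hxp.le, Real.sqrt_mul hA.le] at h1
  nlinarith [sq_nonneg (Real.sqrt ((x + u) ^ p) - Real.sqrt ((x - u) ^ p)),
    Real.sq_sqrt hA.le, Real.sq_sqrt hB.le]

/- ### Monotonicity of `D z = (z+u)^α + (z-u)^α - 2 z^α` in `z` -/

private lemma keyA_pos {α u w : ℝ} (h1 : 1 ≤ α) (hu : 0 ≤ u) (huw : u ≤ w) :
    0 ≤ (w + u) ^ α + (w - u) ^ α - 2 * w ^ α := by
  have := mid_convex (p := α) (u := u) (x := w) h1 hu huw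
  linarith

private lemma keyB_neg {α u w : ℝ} (h0 : 0 ≤ α) (h1 : α ≤ 1) (hu : 0 ≤ u) (huw : u ≤ w) :
    (w + u) ^ α + (w - u) ^ α - 2 * w ^ α ≤ 0 := by
  have := mid_concave (p := α) (u := u) (x := w) h0 h1 hu huw
  linarith

private lemma keyA {α u w : ℝ} (h1 : 1 ≤ α) (h2 : α ≤ 2) (hu : 0 ≤ u) (huw : u ≤ w) :
    (w + u) ^ α + (w - u) ^ α - 2 * w ^ α ≤ (2 * u) ^ α - 2 * u ^ α := by
  have hαpos : 0 < α := lt_of_lt_of_le one_pos h1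
  rcases eq_or_lt_of_le hu with rfl | hupos
  · simp only [add_zero, sub_zero, mul_zero]
    rw [Real.zero_rpow (ne_of_gt hαpos)]
    linarith
  · have hanti : AntitoneOn (fun z : ℝ => (z + u) ^ α + (z - u) ^ α - 2 * z ^ α)
        (Set.Icc u w) := by
      apply antitoneOn_of_hasDerivWithinAt_nonpos (convex_Icc u w)
        (f' := fun x => 1 * α * (x + u) ^ (α - 1) + 1 * α * (x - u) ^ (α - 1)
          - 2 * (α * x ^ (α - 1)))
      · apply Continuous.continuousOn
        apply Continuous.sub
        · exact ((continuous_id.add continuous_const).rpow_const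
            (fun x => Or.inr hαpos.le)).add
            ((continuous_id.sub continuous_const).rpow_const (fun x => Or.inr hαpos.le))
        · exact continuous_const.mul (Real.continuous_rpow_const hαpos.le)
      · intro x hx
        rw [interior_Icc] at hx
        have hxu : u < x := hx.1
        have h1' : HasDerivAt (fun z : ℝ => (z + u) ^ α) (1 * α * (x + u) ^ (α - 1)) x :=
          ((hasDerivAt_id x).add_const u).rpow_const
            (Or.inl (ne_of_gt (by linarith : (0:ℝ) < x + u)))
        have h2' : HasDerivAt (fun z : ℝ => (z - u) ^ α) (1 * α * (x - u) ^ (α - 1)) x :=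
          ((hasDerivAt_id x).sub_const u).rpow_const
            (Or.inl (ne_of_gt (by linarith : (0:ℝ) < x - u)))
        have h3' : HasDerivAt (fun z : ℝ => 2 * z ^ α) (2 * (α * x ^ (α - 1))) x :=
          (Real.hasDerivAt_rpow_const (Or.inl (ne_of_gt (by linarith : (0:ℝ) < x)))).const_mul 2
        exact ((h1'.add h2').sub h3').hasDerivWithinAt
      · intro x hx
        rw [interior_Icc] at hx
        have hxu : u < x := hx.1
        show 1 * α * (x + u) ^ (α - 1) + 1 * α * (x - u) ^ (α - 1)
          - 2 * (α * x ^ (α - 1)) ≤ 0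
        have hmid := mid_concave (p := α - 1) (u := u) (x := x)
          (by linarith) (by linarith) hu hxu.le
        nlinarith [mul_le_mul_of_nonneg_left hmid hαpos.le]
    have h2'' := hanti (Set.mem_Icc.mpr ⟨le_refl u, huw⟩) (Set.mem_Icc.mpr ⟨huw, le_refl w⟩) huw
    have h3'' : (w + u) ^ α + (w - u) ^ α - 2 * w ^ α
        ≤ (u + u) ^ α + (u - u) ^ α - 2 * u ^ α := h2''
    have e : u + u = 2 * u := by ring
    rw [e, sub_self, Real.zero_rpow (ne_of_gt hαpos)] at h3''
    linarith

private lemma keyB {α u w : ℝ} (h0 : 0 < α) (h1 : α ≤ 1) (hu : 0 ≤ u) (huw : u ≤ w) :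
    (2 * u) ^ α - 2 * u ^ α ≤ (w + u) ^ α + (w - u) ^ α - 2 * w ^ α := by
  rcases eq_or_lt_of_le hu with rfl | hupos
  · simp only [add_zero, sub_zero, mul_zero]
    rw [Real.zero_rpow (ne_of_gt h0)]
    linarith
  · have hmono : MonotoneOn (fun z : ℝ => (z + u) ^ α + (z - u) ^ α - 2 * z ^ α)
        (Set.Icc u w) := by
      apply monotoneOn_of_hasDerivWithinAt_nonneg (convex_Icc u w)
        (f' := fun x => 1 * α * (x + u) ^ (α - 1) + 1 * α * (x - u) ^ (α - 1)
          - 2 * (α * x ^ (α - 1)))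
      · apply Continuous.continuousOn
        apply Continuous.sub
        · exact ((continuous_id.add continuous_const).rpow_const
            (fun x => Or.inr h0.le)).add
            ((continuous_id.sub continuous_const).rpow_const (fun x => Or.inr h0.le))
        · exact continuous_const.mul (Real.continuous_rpow_const h0.le)
      · intro x hx
        rw [interior_Icc] at hx
        have hxu : u < x := hx.1
        have h1' : HasDerivAt (fun z : ℝ => (z + u) ^ α) (1 * α * (x + u) ^ (α - 1)) x :=
          ((hasDerivAt_id x).add_const u).rpow_const
            (Or.inl (ne_of_gt (by linarith : (0:ℝ) < x + u)))
        have h2' : HasDerivAt (fun z : ℝ => (z - u) ^ α) (1 * α * (x - u) ^ (α - 1)) x :=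
          ((hasDerivAt_id x).sub_const u).rpow_const
            (Or.inl (ne_of_gt (by linarith : (0:ℝ) < x - u)))
        have h3' : HasDerivAt (fun z : ℝ => 2 * z ^ α) (2 * (α * x ^ (α - 1))) x :=
          (Real.hasDerivAt_rpow_const (Or.inl (ne_of_gt (by linarith : (0:ℝ) < x)))).const_mul 2
        exact ((h1'.add h2').sub h3').hasDerivWithinAt
      · intro x hx
        rw [interior_Icc] at hx
        have hxu : u < x := hx.1
        show 0 ≤ 1 * α * (x + u) ^ (α - 1) + 1 * α * (x - u) ^ (α - 1)
          - 2 * (α * x ^ (α - 1))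
        have hmid := mid_convex_neg (p := α - 1) (u := u) (x := x) (by linarith) hu hxu
        nlinarith [mul_le_mul_of_nonneg_left hmid h0.le]
    have h2'' := hmono (Set.mem_Icc.mpr ⟨le_refl u, huw⟩) (Set.mem_Icc.mpr ⟨huw, le_refl w⟩) huw
    have h3'' : (u + u) ^ α + (u - u) ^ α - 2 * u ^ α
        ≤ (w + u) ^ α + (w - u) ^ α - 2 * w ^ α := h2''
    have e : u + u = 2 * u := by ring
    rw [e, sub_self, Real.zero_rpow (ne_of_gt h0)] at h3''
    linarith

/- ### Per-term bound -/

private lemma term_bounds {h s t : ℝ} (h0 : 0 < h) (h1 : h < 1) (hs : 0 ≤ s) (hst : s ≤ t) :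
    gam h * (t - s) ^ (2 * h) ≤
      subCov h t t + subCov h s s - 2 * subCov h s t ∧
    subCov h t t + subCov h s s - 2 * subCov h s t ≤ nu h * (t - s) ^ (2 * h) := by
  set α := 2 * h with hα
  set u := t - s with hu
  set w := t + s with hw
  have hα0 : 0 < α := by rw [hα]; linarith
  have hα2 : α < 2 := by rw [hα]; linarith
  have hu0 : 0 ≤ u := by rw [hu]; linarith
  have huw : u ≤ w := by rw [hu, hw]; linarith
  have habs : |t - s| = t - s := abs_of_nonneg (by linarith)
  have hF : subCov h t t + subCov h s s - 2 * subCov h s t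
      = u ^ α + w ^ α - (1/2) * ((w + u) ^ α + (w - u) ^ α) := by
    have e1 : t + t = w + u := by rw [hw, hu]; ring
    have e2 : s + s = w - u := by rw [hw, hu]; ring
    have e3 : s + t = w := by rw [hw]; ring
    have e4 : t - s = u := hu.symm
    unfold subCov
    rw [habs, sub_self t, sub_self s, abs_zero, Real.zero_rpow (ne_of_gt hα0),
      e1, e2, e3, e4, ← hα]
    ring
  have hpow : (2:ℝ) ^ (α - 1) = (2:ℝ) ^ α / 2 := by
    rw [Real.rpow_sub (by norm_num), Real.rpow_one]
  have h2u : (2 * u) ^ α = 2 ^ α * u ^ α := Real.mul_rpow (by norm_num) hu0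
  by_cases hcase : 1 / 2 < h
  · have hα1 : 1 ≤ α := by rw [hα]; linarith
    have hA := keyA (u := u) (w := w) hα1 hα2.le hu0 huw
    have hApos := keyA_pos (u := u) (w := w) hα1 hu0 huw
    have hg : gam h = 2 - (2:ℝ) ^ α / 2 := by
      rw [gam, if_pos hcase, ← hpow, hα]
    have hn : nu h = 1 := by rw [nu, if_pos hcase]
    rw [hg, hn, hF]
    constructor
    · nlinarith
    · nlinarith
  · push_neg at hcase
    have hα1 : α ≤ 1 := by rw [hα]; linarith
    have hB := keyB (u := u) (w := w) hα0 hα1 hu0 huw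
    have hBneg := keyB_neg (u := u) (w := w) hα0.le hα1 hu0 huw
    have hg : gam h = 1 := by rw [gam, if_neg (not_lt.mpr hcase)]
    have hn : nu h = 2 - (2:ℝ) ^ α / 2 := by
      rw [nu, if_neg (not_lt.mpr hcase), ← hpow, hα]
    rw [hg, hn, hF]
    constructor
    · nlinarith
    · nlinarith

/-- The two-sided bound
`Σ_i a_i² γ_i (t−s)^{2H_i} ≤ E(S_t^H(a) − S_s^H(a))² ≤ Σ_i a_i² ν_i (t−s)^{2H_i}`. -/
theorem msfbm_increment_variance_bounds (N : ℕ) (a H : Fin N → ℝ)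
    (hH : ∀ i, H i ∈ Set.Ioo (0 : ℝ) 1)
    (s t : ℝ) (hs : 0 ≤ s) (hst : s ≤ t) :
    (∑ i, (a i) ^ 2 * gam (H i) * (t - s) ^ (2 * H i)) ≤ incVar N a H s t ∧
      incVar N a H s t ≤ ∑ i, (a i) ^ 2 * nu (H i) * (t - s) ^ (2 * H i) := by
  have hinc : incVar N a H s t
      = ∑ i, (a i) ^ 2 * (subCov (H i) t t + subCov (H i) s s - 2 * subCov (H i) s t) := by
    unfold incVar mixedCov
    rw [Finset.mul_sum, ← Finset.sum_add_distrib, ← Finset.sum_sub_distrib]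
    exact Finset.sum_congr rfl fun i _ => by ring
  rw [hinc]
  constructor
  · apply Finset.sum_le_sum
    intro i _
    have hb := (term_bounds (hH i).1 (hH i).2 hs hst).1
    rw [mul_assoc]
    exact mul_le_mul_of_nonneg_left hb (sq_nonneg (a i))
  · apply Finset.sum_le_sum
    intro i _
    have hb := (term_bounds (hH i).1 (hH i).2 hs hst).2
    rw [mul_assoc]
    exact mul_le_mul_of_nonneg_left hb (sq_nonneg (a i))
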